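/- Let V be a complex vector space of dimension 2m (m ≥ 1) equipped with a nondegenerate alternating bilinear form ⟨ , ⟩, and let F•¹,…,F•ᵃ be finitely many isotropic full flags in V. Then there exists an isotropic full flag E• in V that is simultaneously in linear general position with each F•ᵏ, i.e., dim(Eᵢ ∩ Fⱼᵏ) = max(0, i + j − 2m) for all 0 ≤ i, j ≤ 2m and all k = 1,…,a. -/

import Mathlib

open Module

/-- The annihilator `∠(W) = {v ∈ V | ⟨v,w⟩ = 0 for all w ∈ W}` of a subspace `W`
with respect to a bilinear form `B`. -/
def ann {V : Type*} [AddCommGroup V] [Module ℂ V]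
    (B : LinearMap.BilinForm ℂ V) (W : Submodule ℂ V) : Submodule ℂ V :=
  W.dualAnnihilator.comap B

/-- A full flag `F₀ = 0 ⊊ F₁ ⊊ ⋯ ⊊ F_{2m} = V` with `dim Fᵢ = i`. -/
def IsFullFlag (m : ℕ) {V : Type*} [AddCommGroup V] [Module ℂ V]
    (F : Fin (2 * m + 1) → Submodule ℂ V) : Prop :=
  F 0 = ⊥ ∧ F (Fin.last (2 * m)) = ⊤ ∧ StrictMono F ∧
    ∀ i, finrank ℂ (F i) = (i : ℕ)

/-- The annihilator flag `∠(F•)`, whose `i`-th member is `∠(F_{2m-i})`. -/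
def annFlag (m : ℕ) {V : Type*} [AddCommGroup V] [Module ℂ V]
    (B : LinearMap.BilinForm ℂ V) (F : Fin (2 * m + 1) → Submodule ℂ V) :
    Fin (2 * m + 1) → Submodule ℂ V :=
  fun i => ann B (F i.rev)

section Aux

variable {V : Type*} [AddCommGroup V] [Module ℂ V]

lemma mem_ann_iff {B : LinearMap.BilinForm ℂ V} {W : Submodule ℂ V} {x : V} :
    x ∈ ann B W ↔ ∀ w ∈ W, B x w = 0 := by
  simp [ann, Submodule.mem_comap, Submodule.mem_dualAnnihilator]

lemma ann_eq_orthogonal {B : LinearMap.BilinForm ℂ V} (hr : B.IsRefl) (W : Submodule ℂ V) :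
    ann B W = B.orthogonal W := by
  ext x
  simp only [mem_ann_iff, LinearMap.BilinForm.mem_orthogonal_iff]
  exact ⟨fun h n hn => hr x n (h n hn), fun h w hw => hr w x (h w hw)⟩

lemma ann_antitone {B : LinearMap.BilinForm ℂ V} {W W' : Submodule ℂ V} (h : W ≤ W') :
    ann B W' ≤ ann B W :=
  fun x hx => mem_ann_iff.2 fun w hw => mem_ann_iff.1 hx w (h hw)

lemma ann_sup {B : LinearMap.BilinForm ℂ V} (W W' : Submodule ℂ V) :
    ann B (W ⊔ W') = ann B W ⊓ ann B W' := by
  simp [ann, Submodule.dualAnnihilator_sup_eq, Submodule.comap_inf]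

lemma ann_bot {B : LinearMap.BilinForm ℂ V} : ann B (⊥ : Submodule ℂ V) = ⊤ := by
  simp [ann]

variable [FiniteDimensional ℂ V]

lemma finrank_ann {B : LinearMap.BilinForm ℂ V} (hB : B.Nondegenerate) (hr : B.IsRefl)
    (W : Submodule ℂ V) : finrank ℂ (ann B W) = finrank ℂ V - finrank ℂ W := by
  rw [ann_eq_orthogonal hr]
  exact LinearMap.BilinForm.finrank_orthogonal hB W

lemma ann_ann {B : LinearMap.BilinForm ℂ V} (hB : B.Nondegenerate) (hr : B.IsRefl)
    (W : Submodule ℂ V) : ann B (ann B W) = W := by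
  rw [ann_eq_orthogonal hr, ann_eq_orthogonal hr]
  exact LinearMap.BilinForm.orthogonal_orthogonal hB hr W

lemma ann_top {B : LinearMap.BilinForm ℂ V} (hB : B.Nondegenerate) (hr : B.IsRefl) :
    ann B (⊤ : Submodule ℂ V) = ⊥ := by
  rw [ann_eq_orthogonal hr]
  exact LinearMap.BilinForm.orthogonal_top_eq_bot hB

/-- Avoiding finitely many proper subspaces of a subspace `A` over the infinite field `ℂ`. -/
lemma exists_avoid {ι : Type*} [Finite ι] (A : Submodule ℂ V) (p : ι → Submodule ℂ V)
    (h : ∀ i, ¬ A ≤ p i) : ∃ v ∈ A, ∀ i, v ∉ p i := by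
  by_contra hc
  push_neg at hc
  have hcov : ⋃ i, (((p i).comap A.subtype : Submodule ℂ A) : Set A) = Set.univ := by
    ext x
    simp only [Set.mem_iUnion, Set.mem_univ, iff_true, SetLike.mem_coe, Submodule.mem_comap,
      Submodule.subtype_apply]
    exact hc x x.2
  obtain ⟨i, hi⟩ := Subspace.exists_eq_top_of_iUnion_eq_univ hcov
  exact h i (Submodule.comap_subtype_eq_top.1 hi)

end Aux

theorem stmt9 (m : ℕ) (hm : 1 ≤ m) (V : Type*) [AddCommGroup V] [Module ℂ V]
    [FiniteDimensional ℂ V] (hdim : finrank ℂ V = 2 * m)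
    (B : LinearMap.BilinForm ℂ V) (halt : B.IsAlt) (hB : B.Nondegenerate)
    (a : ℕ) (F : Fin a → Fin (2 * m + 1) → Submodule ℂ V)
    (hF : ∀ k, IsFullFlag m (F k)) (hiso : ∀ k, annFlag m B (F k) = F k) :
    ∃ E : Fin (2 * m + 1) → Submodule ℂ V, IsFullFlag m E ∧ annFlag m B E = E ∧
      ∀ (k : Fin a) (i j : Fin (2 * m + 1)),
        (finrank ℂ ↥(E i ⊓ F k j) : ℤ)
          = max 0 (((i : ℕ) : ℤ) + ((j : ℕ) : ℤ) - 2 * m) := by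
  have hr : B.IsRefl := halt.isRefl
  -- ℕ-indexed version of the flags F
  set G : Fin a → ℕ → Submodule ℂ V :=
    fun k j => F k ⟨min j (2 * m), Nat.lt_succ_of_le (min_le_right _ _)⟩ with hGdef
  have hGF : ∀ (k : Fin a) (j : ℕ) (hj : j ≤ 2 * m),
      G k j = F k ⟨j, by omega⟩ := by
    intro k j hj
    exact congrArg (F k) (Fin.ext (show min j (2 * m) = j by omega))
  have hGFin : ∀ (k : Fin a) (j : Fin (2 * m + 1)), G k (j : ℕ) = F k j := by
    intro k j
    rw [hGF k j (Fin.is_le j)]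
  have hGrank : ∀ (k : Fin a) (j : ℕ), j ≤ 2 * m → finrank ℂ (G k j) = j := by
    intro k j hj
    rw [hGF k j hj]
    exact (hF k).2.2.2 _
  have hGmono : ∀ (k : Fin a) {j j' : ℕ}, j ≤ j' → j' ≤ 2 * m → G k j ≤ G k j' := by
    intro k j j' hjj' hj'
    rw [hGF k j (by omega), hGF k j' hj']
    exact ((hF k).2.2.1.monotone (by exact Fin.mk_le_mk.2 hjj'))
  have hGann : ∀ (k : Fin a) (j : ℕ), j ≤ 2 * m → ann B (G k (2 * m - j)) = G k j := by
    intro k j hj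
    have h0 : ann B (F k (⟨j, by omega⟩ : Fin (2 * m + 1)).rev) = F k ⟨j, by omega⟩ :=
      congrFun (hiso k) ⟨j, by omega⟩
    have h1 : (⟨j, by omega⟩ : Fin (2 * m + 1)).rev = ⟨2 * m - j, by omega⟩ := by
      apply Fin.ext
      rw [Fin.val_rev]
      show 2 * m + 1 - (j + 1) = 2 * m - j
      omega
    rw [h1] at h0
    rw [hGF k (2 * m - j) (by omega), hGF k j hj]
    exact h0
  have hG0 : ∀ k : Fin a, G k 0 = ⊥ := by
    intro k
    rw [hGF k 0 (by omega)]
    exact (hF k).1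
  -- the extension step
  have step : ∀ i, i < m → ∀ W : Submodule ℂ V, finrank ℂ W = i → W ≤ ann B W →
      (∀ k, W ⊓ G k (2 * m - i) = ⊥) →
      ∃ W', W ≤ W' ∧ finrank ℂ W' = i + 1 ∧ W' ≤ ann B W' ∧
        ∀ k, W' ⊓ G k (2 * m - (i + 1)) = ⊥ := by
    intro i him W hWrank hWiso hWtrans
    have hA : finrank ℂ (ann B W) = 2 * m - i := by
      rw [finrank_ann hB hr, hdim, hWrank]
    have hnotW : ¬ ann B W ≤ W := by
      intro hle
      have := Submodule.finrank_mono hle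
      omega
    have hnotbad : ∀ k, ¬ ann B W ≤ W ⊔ G k (2 * m - (i + 1)) := by
      intro k hle
      have h1 : ann B (W ⊔ G k (2 * m - (i + 1))) ≤ W := by
        calc ann B (W ⊔ G k (2 * m - (i + 1))) ≤ ann B (ann B W) := ann_antitone hle
        _ = W := ann_ann hB hr W
      have h2 : ann B (W ⊔ G k (2 * m - (i + 1))) = ann B W ⊓ G k (i + 1) := by
        rw [ann_sup]
        congr 1
        exact hGann k (i + 1) (by omega)
      have h3 : ann B W ⊓ G k (i + 1) = ⊥ := by
        rw [eq_bot_iff]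
        rintro x ⟨hx1, hx2⟩
        have hxW : x ∈ W := h1 (h2 ▸ (⟨hx1, hx2⟩ : x ∈ ann B W ⊓ G k (i + 1)))
        have hxG : x ∈ G k (2 * m - i) := hGmono k (by omega) (by omega) hx2
        have h0 := hWtrans k
        rw [eq_bot_iff] at h0
        exact h0 ⟨hxW, hxG⟩
      have h4 := Submodule.finrank_sup_add_finrank_inf_eq (ann B W) (G k (i + 1))
      rw [h3, finrank_bot, hA, hGrank k (i + 1) (by omega)] at h4
      have h5 : finrank ℂ ↥(ann B W ⊔ G k (i + 1)) ≤ 2 * m :=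
        hdim ▸ Submodule.finrank_le _
      omega
    obtain ⟨v, hvA, hv⟩ := exists_avoid (ann B W)
      (fun o : Option (Fin a) => o.elim W (fun k => W ⊔ G k (2 * m - (i + 1))))
      (by rintro (_ | k); exacts [hnotW, hnotbad k])
    have hvW : v ∉ W := hv none
    have hvbad : ∀ k, v ∉ W ⊔ G k (2 * m - (i + 1)) := fun k => hv (some k)
    have hvne : v ≠ 0 := fun h => hvW (h ▸ W.zero_mem)
    have hint : W ⊓ (ℂ ∙ v) = ⊥ := by
      rw [eq_bot_iff]
      rintro x ⟨hxW, hxv⟩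
      obtain ⟨c, rfl⟩ := Submodule.mem_span_singleton.1 hxv
      rcases eq_or_ne c 0 with rfl | hc
      · simp
      · exfalso
        apply hvW
        have := W.smul_mem c⁻¹ hxW
        rwa [smul_smul, inv_mul_cancel₀ hc, one_smul] at this
    refine ⟨W ⊔ (ℂ ∙ v), le_sup_left, ?_, ?_, ?_⟩
    · have h4 := Submodule.finrank_sup_add_finrank_inf_eq W (ℂ ∙ v)
      rw [hint, finrank_bot, add_zero, hWrank, finrank_span_singleton hvne] at h4
      exact h4
    · intro x hx
      rw [mem_ann_iff]
      intro y hy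
      obtain ⟨w1, hw1, s1, hs1, rfl⟩ := Submodule.mem_sup.1 hx
      obtain ⟨w2, hw2, s2, hs2, rfl⟩ := Submodule.mem_sup.1 hy
      obtain ⟨c1, rfl⟩ := Submodule.mem_span_singleton.1 hs1
      obtain ⟨c2, rfl⟩ := Submodule.mem_span_singleton.1 hs2
      have h11 : B w1 w2 = 0 := mem_ann_iff.1 (hWiso hw1) w2 hw2
      have h12 : B v w2 = 0 := mem_ann_iff.1 hvA w2 hw2
      have h13 : B v w1 = 0 := mem_ann_iff.1 hvA w1 hw1
      have h14 : B w1 v = 0 := hr v w1 h13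
      simp [map_add, LinearMap.add_apply, map_smul, LinearMap.smul_apply,
        h11, h12, h13, h14, halt v]
    · intro k
      rw [eq_bot_iff]
      rintro x ⟨hx1, hx2⟩
      obtain ⟨w, hw, s, hs, rfl⟩ := Submodule.mem_sup.1 hx1
      obtain ⟨c, rfl⟩ := Submodule.mem_span_singleton.1 hs
      rcases eq_or_ne c 0 with rfl | hc
      · have hwG : w ∈ G k (2 * m - i) := by
          refine hGmono k (j := 2 * m - (i + 1)) (j' := 2 * m - i) (by omega) (by omega) ?_
          simpa using hx2
        have h0 := hWtrans k
        rw [eq_bot_iff] at h0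
        simpa using h0 ⟨hw, hwG⟩
      · exfalso
        apply hvbad k
        have h1 : w + c • v ∈ W ⊔ G k (2 * m - (i + 1)) := Submodule.mem_sup_right hx2
        have h2 : c • v ∈ W ⊔ G k (2 * m - (i + 1)) := by
          have := Submodule.sub_mem _ h1 (Submodule.mem_sup_left hw)
          rwa [add_sub_cancel_left] at this
        have := Submodule.smul_mem _ c⁻¹ h2
        rwa [smul_smul, inv_mul_cancel₀ hc, one_smul] at this
  -- the chain of isotropic subspaces E₁ ⊂ ⋯ ⊂ E_m in good position
  have chain : ∀ i, i ≤ m → ∃ e : ℕ → Submodule ℂ V,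
      (∀ j, j ≤ i → finrank ℂ (e j) = j ∧ e j ≤ ann B (e j) ∧
        ∀ k, e j ⊓ G k (2 * m - j) = ⊥) ∧
      (∀ j, j + 1 ≤ i → e j ≤ e (j + 1)) := by
    intro i
    induction i with
    | zero =>
      intro _
      refine ⟨fun _ => ⊥, ?_, ?_⟩
      · intro j hj
        have : j = 0 := by omega
        subst this
        exact ⟨by simp, bot_le, fun k => by simp⟩
      · intro j hj
        omega
    | succ i ih =>
      intro hi
      obtain ⟨e, he1, he2⟩ := ih (by omega)
      obtain ⟨hrank, hiso', htrans⟩ := he1 i le_rfl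
      obtain ⟨W', hle, h1, h2, h3⟩ := step i (by omega) (e i) hrank hiso' htrans
      refine ⟨fun j => if j ≤ i then e j else W', ?_, ?_⟩
      · intro j hj
        beta_reduce
        by_cases h : j ≤ i
        · rw [if_pos h]
          exact he1 j h
        · have : j = i + 1 := by omega
          subst this
          rw [if_neg h]
          exact ⟨h1, h2, h3⟩
      · intro j hj
        beta_reduce
        by_cases h : j + 1 ≤ i
        · rw [if_pos (by omega : j ≤ i), if_pos h]
          exact he2 j h
        · have hj' : j = i := by omega
          subst hj'
          rw [if_pos le_rfl, if_neg (by omega : ¬ j + 1 ≤ j)]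
          exact hle
  obtain ⟨e, heprop, hestep⟩ := chain m le_rfl
  have hemono : ∀ j j' : ℕ, j ≤ j' → j' ≤ m → e j ≤ e j' := by
    intro j j' hjj' hj'
    induction j', hjj' using Nat.le_induction with
    | base => exact le_rfl
    | succ n hn ih => exact le_trans (ih (by omega)) (hestep n (by omega))
  have hEm : ann B (e m) = e m := by
    refine (Submodule.eq_of_le_of_finrank_le (heprop m le_rfl).2.1 ?_).symm
    have hfr := (heprop m le_rfl).1
    rw [finrank_ann hB hr, hdim, hfr]
    omega
  -- the natural-number indexed full flag
  set Efun : ℕ → Submodule ℂ V :=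
    fun i => if i ≤ m then e i else ann B (e (2 * m - i)) with hEdef
  have hEle : ∀ i, i ≤ m → Efun i = e i := fun i h => if_pos h
  have hEgt : ∀ i, ¬ i ≤ m → Efun i = ann B (e (2 * m - i)) := fun i h => if_neg h
  have hErank : ∀ i, i ≤ 2 * m → finrank ℂ (Efun i) = i := by
    intro i hi
    by_cases h : i ≤ m
    · rw [hEle i h]; exact (heprop i h).1
    · have hfr := (heprop (2 * m - i) (by omega : 2 * m - i ≤ m)).1
      rw [hEgt i h, finrank_ann hB hr, hdim, hfr]
      omega
  have hEann : ∀ i, i ≤ 2 * m → ann B (Efun (2 * m - i)) = Efun i := by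
    intro i hi
    rcases lt_trichotomy i m with h | h | h
    · rw [hEgt (2 * m - i) (by omega), hEle i (le_of_lt h)]
      have h2 : 2 * m - (2 * m - i) = i := by omega
      rw [h2]
      exact ann_ann hB hr (e i)
    · rw [h]
      have h1 : 2 * m - m = m := by omega
      rw [h1, hEle m le_rfl]
      exact hEm
    · rw [hEle (2 * m - i) (by omega), hEgt i (by omega)]
  have hEmono : ∀ i j, i ≤ j → j ≤ 2 * m → Efun i ≤ Efun j := by
    intro i j hij hj
    by_cases hjm : j ≤ m
    · rw [hEle i (le_trans hij hjm), hEle j hjm]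
      exact hemono i j hij hjm
    · by_cases him : i ≤ m
      · rw [hEle i him, hEgt j hjm]
        calc e i ≤ e m := hemono i m him le_rfl
        _ = ann B (e m) := hEm.symm
        _ ≤ ann B (e (2 * m - j)) := ann_antitone (hemono (2 * m - j) m (by omega) le_rfl)
      · rw [hEgt i him, hEgt j hjm]
        exact ann_antitone (hemono (2 * m - j) (2 * m - i) (by omega) (by omega))
  have hEtrans : ∀ i, i ≤ 2 * m → ∀ k, Efun i ⊓ G k (2 * m - i) = ⊥ := by
    intro i hi k
    by_cases h : i ≤ m
    · rw [hEle i h]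
      exact (heprop i h).2.2 k
    · have htop : e (2 * m - i) ⊔ G k (2 * m - (2 * m - i)) = ⊤ := by
        apply Submodule.eq_top_of_finrank_eq
        have h4 := Submodule.finrank_sup_add_finrank_inf_eq (e (2 * m - i))
          (G k (2 * m - (2 * m - i)))
        rw [(heprop (2 * m - i) (by omega)).2.2 k, finrank_bot, add_zero,
          (heprop (2 * m - i) (by omega)).1, hGrank k _ (by omega)] at h4
        rw [h4, hdim]
        omega
      have hGrw : G k (2 * m - i) = ann B (G k (2 * m - (2 * m - i))) := by
        rw [hGann k (2 * m - i) (by omega)]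
      rw [hEgt i h, hGrw, ← ann_sup, htop, ann_top hB hr]
  -- the main dimension count
  have claim : ∀ i, i ≤ 2 * m → ∀ j, j ≤ 2 * m → ∀ k,
      (finrank ℂ ↥(Efun i ⊓ G k j) : ℤ) = max 0 ((i : ℤ) + (j : ℤ) - 2 * (m : ℤ)) := by
    intro i hi j hj k
    by_cases hij : i + j ≤ 2 * m
    · have hzero : Efun i ⊓ G k j = ⊥ := by
        rw [eq_bot_iff, ← hEtrans i hi k]
        exact inf_le_inf_left _ (hGmono k (by omega) (by omega))
      rw [hzero, finrank_bot]
      rw [max_eq_left (by omega : (i : ℤ) + (j : ℤ) - 2 * (m : ℤ) ≤ 0)]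
      simp
    · -- lower bound
      have h4 := Submodule.finrank_sup_add_finrank_inf_eq (Efun i) (G k j)
      have h5 : finrank ℂ ↥(Efun i ⊔ G k j) ≤ 2 * m := hdim ▸ Submodule.finrank_le _
      rw [hErank i hi, hGrank k j hj] at h4
      -- upper bound
      have hzero : (Efun i ⊓ G k j) ⊓ Efun (2 * m - j) = ⊥ := by
        rw [eq_bot_iff, ← hEtrans (2 * m - j) (by omega) k]
        rintro x ⟨hx1, hx2⟩
        refine ⟨hx2, ?_⟩
        have hjj : 2 * m - (2 * m - j) = j := by omega
        rw [hjj]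
        exact hx1.2
      have h6 := Submodule.finrank_sup_add_finrank_inf_eq (Efun i ⊓ G k j) (Efun (2 * m - j))
      rw [hzero, finrank_bot, add_zero, hErank (2 * m - j) (by omega)] at h6
      have h7 : finrank ℂ ↥((Efun i ⊓ G k j) ⊔ Efun (2 * m - j)) ≤ i := by
        have hsub : (Efun i ⊓ G k j) ⊔ Efun (2 * m - j) ≤ Efun i :=
          sup_le inf_le_left (hEmono _ _ (by omega) hi)
        have := Submodule.finrank_mono hsub
        rwa [hErank i hi] at this
      have h8 : finrank ℂ ↥(Efun i ⊓ G k j) = i + j - 2 * m := by omega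
      rw [h8, max_eq_right (by omega : (0 : ℤ) ≤ (i : ℤ) + (j : ℤ) - 2 * (m : ℤ))]
      omega
  -- assemble the flag
  refine ⟨fun i => Efun (i : ℕ), ⟨?_, ?_, ?_, ?_⟩, ?_, ?_⟩
  · show Efun ((0 : Fin (2 * m + 1)) : ℕ) = ⊥
    rw [Fin.val_zero, hEle 0 (Nat.zero_le m)]
    exact Submodule.finrank_eq_zero.1 (heprop 0 (Nat.zero_le m)).1
  · show Efun ((Fin.last (2 * m) : Fin (2 * m + 1)) : ℕ) = ⊤
    rw [Fin.val_last]
    exact Submodule.eq_top_of_finrank_eq (by rw [hErank (2 * m) le_rfl, hdim])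
  · intro i j hij
    exact Submodule.lt_of_le_of_finrank_lt_finrank
      (hEmono _ _ (le_of_lt hij) (Fin.is_le j))
      (by rw [hErank _ (Fin.is_le i), hErank _ (Fin.is_le j)]; exact hij)
  · intro i
    exact hErank _ (Fin.is_le i)
  · funext i
    show ann B (Efun ((i.rev : Fin (2 * m + 1)) : ℕ)) = Efun (i : ℕ)
    have hrev : ((i.rev : Fin (2 * m + 1)) : ℕ) = 2 * m - (i : ℕ) := by
      rw [Fin.val_rev]
      omega
    rw [hrev]
    exact hEann _ (Fin.is_le i)
  · intro k i j
    have := claim (i : ℕ) (Fin.is_le i) (j : ℕ) (Fin.is_le j) k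
    rwa [hGFin k j] at this
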